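/- For every v ∈ (0,1) there exist constants c₁, c₂ > 0 (possibly depending on v) such that for every m₀ ≥ 1, the probability of the event {for all real m ≥ m₀: N((1+v)m) − N(m) < 2vm, and (1−v)m < N(m) < (1+v)m} is at least 1 − c₁·exp(−c₂·v·m₀). -/

import Mathlib

open MeasureTheory ENNReal ProbabilityTheory

noncomputable section

/-- `S k ω = ξ_1(ω) + … + ξ_k(ω)`: partial sums of the sequence `ξ` (indexed from `0`). -/
def partialSum {Ω : Type*} (ξ : ℕ → Ω → ℝ) (k : ℕ) (ω : Ω) : ℝ :=
  ∑ i ∈ Finset.range k, ξ i ω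

section PoissonAux

open Real Set

variable {Ω : Type} [MeasurableSpace Ω] {μ : Measure Ω} [IsProbabilityMeasure μ]
  {ξ : ℕ → Ω → ℝ}

lemma map_eq_exp (hmeas : ∀ k, Measurable (ξ k))
    (hcdf : ∀ k, ∀ t : ℝ, 0 ≤ t → μ {ω | ξ k ω ≤ t} = ENNReal.ofReal (1 - Real.exp (-t)))
    (k : ℕ) : Measure.map (ξ k) μ = expMeasure 1 := by
  have h0 : μ {ω | ξ k ω ≤ 0} = 0 := by simpa using hcdf k 0 le_rfl
  have : IsProbabilityMeasure (Measure.map (ξ k) μ) :=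
    Measure.isProbabilityMeasure_map (hmeas k).aemeasurable
  refine Measure.ext_of_Iic _ _ (fun a => ?_)
  rw [Measure.map_apply (hmeas k) measurableSet_Iic]
  have hexp : expMeasure 1 (Set.Iic a)
      = ENNReal.ofReal (if 0 ≤ a then 1 - rexp (-(1*a)) else 0) := by
    rw [expMeasure, gammaMeasure, withDensity_apply _ measurableSet_Iic,
      show gammaPDF 1 1 = exponentialPDF 1 from rfl,
      lintegral_exponentialPDF_eq_antiDeriv one_pos a]
  rw [hexp]
  rcases le_or_gt 0 a with ha | ha
  · rw [if_pos ha]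
    have := hcdf k a ha
    simpa [one_mul] using (show μ (ξ k ⁻¹' Iic a) = _ from this)
  · rw [if_neg (not_le.mpr ha)]
    have hsub : (ξ k) ⁻¹' (Set.Iic a) ⊆ {ω | ξ k ω ≤ 0} := fun ω hω => le_trans hω ha.le
    simpa using measure_mono_null hsub h0

lemma lintegral_exp_mul (hmeas : ∀ k, Measurable (ξ k))
    (hcdf : ∀ k, ∀ t : ℝ, 0 ≤ t → μ {ω | ξ k ω ≤ t} = ENNReal.ofReal (1 - Real.exp (-t)))
    (k : ℕ) {t : ℝ} (ht : t < 1) :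
    ∫⁻ ω, ENNReal.ofReal (rexp (t * ξ k ω)) ∂μ = ENNReal.ofReal ((1 - t)⁻¹) := by
  have hr : 0 < 1 - t := by linarith
  have hmap := map_eq_exp hmeas hcdf k
  have h1 : ∫⁻ ω, ENNReal.ofReal (rexp (t * ξ k ω)) ∂μ
      = ∫⁻ x, ENNReal.ofReal (rexp (t * x)) ∂(Measure.map (ξ k) μ) := by
    rw [lintegral_map ((measurable_id'.const_mul t).exp.ennreal_ofReal) (hmeas k)]
  have hgm : Measurable (gammaPDF 1 1) := (measurable_gammaPDFReal 1 1).ennreal_ofReal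
  rw [h1, hmap, expMeasure, gammaMeasure,
    lintegral_withDensity_eq_lintegral_mul _ hgm ((measurable_id'.const_mul t).exp.ennreal_ofReal)]
  have hpt : ∀ x : ℝ, (gammaPDF 1 1 x) * ENNReal.ofReal (rexp (t * x))
      = (ENNReal.ofReal (1 - t))⁻¹ * exponentialPDF (1 - t) x := by
    intro x
    rw [show gammaPDF 1 1 x = exponentialPDF 1 x from rfl, exponentialPDF_eq,
      exponentialPDF_eq]
    rcases le_or_gt 0 x with hx | hx
    · rw [if_pos hx, if_pos hx, one_mul, one_mul, ← ENNReal.ofReal_mul (exp_pos _).le,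
        ← exp_add, ENNReal.ofReal_mul hr.le, ← mul_assoc,
        ENNReal.inv_mul_cancel (ENNReal.ofReal_pos.mpr hr).ne' ENNReal.ofReal_ne_top, one_mul]
      congr 1
      ring_nf
    · rw [if_neg (not_le.mpr hx), if_neg (not_le.mpr hx)]
      simp
  simp only [Pi.mul_apply, hpt]
  have hem : Measurable (exponentialPDF (1 - t)) := (measurable_exponentialPDFReal _).ennreal_ofReal
  rw [lintegral_const_mul _ hem, lintegral_exponentialPDF_eq_one hr, mul_one,
    ENNReal.ofReal_inv_of_pos hr]

lemma exp_mul_integrable (hmeas : ∀ k, Measurable (ξ k))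
    (hcdf : ∀ k, ∀ t : ℝ, 0 ≤ t → μ {ω | ξ k ω ≤ t} = ENNReal.ofReal (1 - Real.exp (-t)))
    (k : ℕ) {t : ℝ} (ht : t < 1) :
    Integrable (fun ω => rexp (t * ξ k ω)) μ := by
  refine ⟨((hmeas k).const_mul t).exp.aestronglyMeasurable, ?_⟩
  rw [hasFiniteIntegral_iff_ofReal (ae_of_all _ fun ω => (exp_pos _).le)]
  rw [lintegral_exp_mul hmeas hcdf k ht]
  exact ENNReal.ofReal_lt_top

lemma mgf_xi (hmeas : ∀ k, Measurable (ξ k))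
    (hcdf : ∀ k, ∀ t : ℝ, 0 ≤ t → μ {ω | ξ k ω ≤ t} = ENNReal.ofReal (1 - Real.exp (-t)))
    (k : ℕ) {t : ℝ} (ht : t < 1) :
    mgf (ξ k) μ t = (1 - t)⁻¹ := by
  have hr : 0 < 1 - t := by linarith
  rw [mgf, integral_eq_lintegral_of_nonneg_ae (ae_of_all _ fun ω => (exp_pos _).le)
    ((hmeas k).const_mul t).exp.aestronglyMeasurable, lintegral_exp_mul hmeas hcdf k ht,
    ENNReal.toReal_ofReal (by positivity)]

lemma partialSum_eq_sum (ξ : ℕ → Ω → ℝ) (n : ℕ) :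
    partialSum ξ n = ∑ i ∈ Finset.range n, ξ i := by
  funext ω
  simp [partialSum, Finset.sum_apply]

lemma chernoff_upper (hmeas : ∀ k, Measurable (ξ k))
    (hind : iIndepFun ξ μ)
    (hcdf : ∀ k, ∀ t : ℝ, 0 ≤ t → μ {ω | ξ k ω ≤ t} = ENNReal.ofReal (1 - Real.exp (-t)))
    {w : ℝ} (hw0 : 0 < w) (hw1 : w < 1) (n : ℕ) :
    μ {ω | (1 + w) * n ≤ partialSum ξ n ω}
      ≤ ENNReal.ofReal (rexp (-(w - Real.log (1 + w)) * n)) := by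
  set t : ℝ := w / (1 + w) with htdef
  have h1w : (0:ℝ) < 1 + w := by linarith
  have ht0 : 0 ≤ t := by positivity
  have ht1 : t < 1 := by
    rw [div_lt_one h1w]; linarith
  have h1t : 1 - t = (1 + w)⁻¹ := by
    rw [htdef]
    field_simp
    ring
  have hint : Integrable (fun ω => rexp (t * partialSum ξ n ω)) μ := by
    rw [partialSum_eq_sum]
    exact hind.integrable_exp_mul_sum hmeas (fun i _ => exp_mul_integrable hmeas hcdf i ht1)
  have hmgf : mgf (partialSum ξ n) μ t = (1 + w) ^ n := by
    rw [partialSum_eq_sum, hind.mgf_sum hmeas]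
    rw [Finset.prod_congr rfl (fun i _ => mgf_xi hmeas hcdf i ht1)]
    simp [h1t]
  have hch := measure_ge_le_exp_mul_mgf ((1 + w) * n) ht0 hint
  rw [hmgf] at hch
  have hval : rexp (-t * ((1 + w) * n)) * (1 + w) ^ n
      = rexp (-(w - Real.log (1 + w)) * n) := by
    rw [← Real.exp_log (pow_pos h1w n), ← Real.exp_add]
    congr 1
    rw [Real.log_pow, htdef]
    field_simp
    ring
  rw [hval] at hch
  calc μ {ω | (1 + w) * n ≤ partialSum ξ n ω}
      = ENNReal.ofReal (μ {ω | (1 + w) * n ≤ partialSum ξ n ω}).toReal := by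
        rw [ENNReal.ofReal_toReal (measure_ne_top _ _)]
    _ ≤ ENNReal.ofReal (rexp (-(w - Real.log (1 + w)) * n)) := ENNReal.ofReal_le_ofReal hch

lemma chernoff_lower (hmeas : ∀ k, Measurable (ξ k))
    (hind : iIndepFun ξ μ)
    (hcdf : ∀ k, ∀ t : ℝ, 0 ≤ t → μ {ω | ξ k ω ≤ t} = ENNReal.ofReal (1 - Real.exp (-t)))
    {w : ℝ} (hw0 : 0 < w) (hw1 : w < 1) (n : ℕ) :
    μ {ω | partialSum ξ n ω ≤ (1 - w) * n}
      ≤ ENNReal.ofReal (rexp (-(Real.log (1 + w) - w + w ^ 2) * n)) := by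
  have h1w : (0:ℝ) < 1 + w := by linarith
  have ht1 : -w < 1 := by linarith
  have hint : Integrable (fun ω => rexp (-w * partialSum ξ n ω)) μ := by
    rw [partialSum_eq_sum]
    exact hind.integrable_exp_mul_sum hmeas (fun i _ => exp_mul_integrable hmeas hcdf i ht1)
  have hmgf : mgf (partialSum ξ n) μ (-w) = ((1 + w)⁻¹) ^ n := by
    rw [partialSum_eq_sum, hind.mgf_sum hmeas]
    rw [Finset.prod_congr rfl (fun i _ => mgf_xi hmeas hcdf i ht1)]
    norm_num
  have hch := measure_le_le_exp_mul_mgf ((1 - w) * n) (neg_nonpos.mpr hw0.le) hint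
  rw [hmgf] at hch
  have hval : rexp (-(-w) * ((1 - w) * n)) * ((1 + w)⁻¹) ^ n
      = rexp (-(Real.log (1 + w) - w + w ^ 2) * n) := by
    rw [← Real.exp_log (pow_pos (inv_pos.mpr h1w) n), ← Real.exp_add]
    congr 1
    rw [Real.log_pow, Real.log_inv]
    ring
  rw [hval] at hch
  calc μ {ω | partialSum ξ n ω ≤ (1 - w) * n}
      = ENNReal.ofReal (μ {ω | partialSum ξ n ω ≤ (1 - w) * n}).toReal := by
        rw [ENNReal.ofReal_toReal (measure_ne_top _ _)]
    _ ≤ _ := ENNReal.ofReal_le_ofReal hch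

lemma rate1_pos {w : ℝ} (hw0 : 0 < w) : 0 < w - Real.log (1 + w) := by
  have := Real.log_lt_sub_one_of_pos (x := 1 + w) (by linarith) (by linarith)
  linarith

lemma rate2_pos {w : ℝ} (hw0 : 0 < w) : 0 < Real.log (1 + w) - w + w ^ 2 := by
  have h1w : (0:ℝ) < 1 + w := by linarith
  have h := Real.log_lt_sub_one_of_pos (x := (1 + w)⁻¹) (by positivity)
    (by rw [ne_eq, inv_eq_one]; intro h; linarith)
  rw [Real.log_inv] at h
  have hlog : 1 - (1 + w)⁻¹ < Real.log (1 + w) := by linarith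
  have hkey : w / (1 + w) = 1 - (1 + w)⁻¹ := by field_simp; ring
  have h2 : w / (1 + w) < Real.log (1 + w) := by rw [hkey]; exact hlog
  have h3 : w - w ^ 2 < w / (1 + w) := by
    rw [lt_div_iff₀ h1w]; nlinarith [mul_pos (mul_pos hw0 hw0) hw0]
  linarith

lemma bad_bound (hmeas : ∀ k, Measurable (ξ k))
    (hind : iIndepFun ξ μ)
    (hcdf : ∀ k, ∀ t : ℝ, 0 ≤ t → μ {ω | ξ k ω ≤ t} = ENNReal.ofReal (1 - Real.exp (-t)))
    {w : ℝ} (hw0 : 0 < w) (hw1 : w < 1) {ρ : ℝ}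
    (hρ : ρ = min (w - Real.log (1 + w)) (Real.log (1 + w) - w + w ^ 2)) (k₀ : ℕ) :
    μ (⋃ j : ℕ, ({ω | partialSum ξ (k₀ + j) ω ≤ (1 - w) * ((k₀ + j : ℕ) : ℝ)}
        ∪ {ω | (1 + w) * ((k₀ + j : ℕ) : ℝ) ≤ partialSum ξ (k₀ + j) ω}))
      ≤ ENNReal.ofReal ((2 * (1 - rexp (-ρ))⁻¹) * rexp (-ρ * k₀)) := by
  have hρ0 : 0 < ρ := by
    rw [hρ]; exact lt_min (rate1_pos hw0) (rate2_pos hw0)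
  have hq1 : rexp (-ρ) < 1 := by
    rw [Real.exp_lt_one_iff]; linarith
  have hBk : ∀ n : ℕ, μ ({ω | partialSum ξ n ω ≤ (1 - w) * n}
      ∪ {ω | (1 + w) * n ≤ partialSum ξ n ω}) ≤ ENNReal.ofReal (2 * rexp (-ρ * n)) := by
    intro n
    refine le_trans (measure_union_le _ _) ?_
    have e1 := chernoff_lower hmeas hind hcdf hw0 hw1 n
    have e2 := chernoff_upper hmeas hind hcdf hw0 hw1 n
    have hr1 : rexp (-(Real.log (1 + w) - w + w ^ 2) * n) ≤ rexp (-ρ * n) := by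
      apply Real.exp_le_exp.mpr
      have : ρ ≤ Real.log (1 + w) - w + w ^ 2 := by rw [hρ]; exact min_le_right _ _
      nlinarith [(Nat.cast_nonneg n : (0:ℝ) ≤ n)]
    have hr2 : rexp (-(w - Real.log (1 + w)) * n) ≤ rexp (-ρ * n) := by
      apply Real.exp_le_exp.mpr
      have : ρ ≤ w - Real.log (1 + w) := by rw [hρ]; exact min_le_left _ _
      nlinarith [(Nat.cast_nonneg n : (0:ℝ) ≤ n)]
    calc μ {ω | partialSum ξ n ω ≤ (1 - w) * n} + μ {ω | (1 + w) * n ≤ partialSum ξ n ω}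
        ≤ ENNReal.ofReal (rexp (-ρ * n)) + ENNReal.ofReal (rexp (-ρ * n)) :=
          add_le_add (e1.trans (ENNReal.ofReal_le_ofReal hr1))
            (e2.trans (ENNReal.ofReal_le_ofReal hr2))
      _ = ENNReal.ofReal (2 * rexp (-ρ * n)) := by
          rw [two_mul, ENNReal.ofReal_add (exp_pos _).le (exp_pos _).le]
  refine le_trans (measure_iUnion_le _) ?_
  have hterm : ∀ j : ℕ, μ ({ω | partialSum ξ (k₀ + j) ω ≤ (1 - w) * ((k₀ + j : ℕ) : ℝ)}
      ∪ {ω | (1 + w) * ((k₀ + j : ℕ) : ℝ) ≤ partialSum ξ (k₀ + j) ω})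
      ≤ ENNReal.ofReal (2 * rexp (-ρ * k₀)) * (ENNReal.ofReal (rexp (-ρ))) ^ j := by
    intro j
    refine le_trans (hBk (k₀ + j)) ?_
    rw [← ENNReal.ofReal_pow (exp_pos _).le, ← ENNReal.ofReal_mul (by positivity)]
    apply ENNReal.ofReal_le_ofReal
    rw [← Real.exp_nat_mul, mul_assoc, ← Real.exp_add]
    apply mul_le_mul_of_nonneg_left _ (by norm_num : (0:ℝ) ≤ 2)
    apply Real.exp_le_exp.mpr
    push_cast
    nlinarith [(Nat.cast_nonneg j : (0:ℝ) ≤ j), (Nat.cast_nonneg k₀ : (0:ℝ) ≤ k₀)]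
  refine le_trans (ENNReal.tsum_le_tsum hterm) ?_
  rw [ENNReal.tsum_mul_left, ENNReal.tsum_geometric]
  have h1q : (1 : ℝ≥0∞) - ENNReal.ofReal (rexp (-ρ)) = ENNReal.ofReal (1 - rexp (-ρ)) := by
    rw [← ENNReal.ofReal_one, ← ENNReal.ofReal_sub _ (exp_pos _).le]
  rw [h1q, ← ENNReal.ofReal_inv_of_pos (by linarith), ← ENNReal.ofReal_mul (by positivity)]
  apply ENNReal.ofReal_le_ofReal
  ring_nf
  exact le_rfl

set_option maxHeartbeats 1000000 in
lemma deterministic {v w : ℝ} (hv0 : 0 < v) (hv1 : v < 1) (hw : w = v / 16)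
    {m₀ m : ℝ} (hm₀ : 4 / v ≤ m₀) (hm : m₀ ≤ m) {k₀ : ℕ}
    (hk₀l : v * m₀ / 16 ≤ (k₀ : ℝ)) (hk₀u : (k₀ : ℝ) ≤ v * m₀ / 16 + 1)
    {ξ : ℕ → Ω → ℝ} (ω : Ω) (h1 : ∀ i, 0 ≤ ξ i ω)
    (h2 : ∀ k : ℕ, k₀ ≤ k →
      (1 - w) * k < partialSum ξ k ω ∧ partialSum ξ k ω < (1 + w) * k) :
    (({k : ℕ | 1 ≤ k ∧ m < partialSum ξ k ω ∧
        partialSum ξ k ω ≤ (1 + v) * m} : Set ℕ).encard : ℝ≥0∞)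
      < ENNReal.ofReal (2 * v * m) ∧
    ENNReal.ofReal ((1 - v) * m)
      < (({k : ℕ | 1 ≤ k ∧ partialSum ξ k ω ≤ m} : Set ℕ).encard : ℝ≥0∞) ∧
    (({k : ℕ | 1 ≤ k ∧ partialSum ξ k ω ≤ m} : Set ℕ).encard : ℝ≥0∞)
      < ENNReal.ofReal ((1 + v) * m) := by
  have hw0 : 0 < w := by rw [hw]; positivity
  have hw16 : w ≤ 1 / 16 := by rw [hw]; linarith
  have h1w : (0:ℝ) < 1 + w := by linarith
  have h1mw : (0:ℝ) < 1 - w := by linarith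
  have h4m : 4 ≤ v * m₀ := by
    rw [div_le_iff₀ hv0] at hm₀; linarith
  have hm4 : (4:ℝ) ≤ m := by nlinarith
  have hvm : (4:ℝ) ≤ v * m := by nlinarith
  have hm0 : (0:ℝ) < m := by linarith
  have hwm : 16 * w * m = v * m := by rw [hw]; ring
  have hk₀u' : (k₀ : ℝ) ≤ w * m + 1 := by
    have : v * m₀ / 16 ≤ w * m := by rw [hw]; nlinarith
    linarith
  have hk₀1 : 1 ≤ k₀ := by
    by_contra hc
    push_neg at hc
    interval_cases k₀
    · simp only [Nat.cast_zero] at hk₀l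
      nlinarith
  -- monotonicity of partial sums
  have hmono : ∀ j k : ℕ, j ≤ k → partialSum ξ j ω ≤ partialSum ξ k ω := by
    intro j k hjk
    exact Finset.sum_le_sum_of_subset_of_nonneg
      (Finset.range_subset_range.mpr hjk) (fun i _ _ => h1 i)
  -- Part 3 : upper bound on N(m)
  have hA : ∀ k : ℕ, 1 ≤ k → partialSum ξ k ω ≤ m → (k : ℝ) < (1 + v) * m := by
    intro k hk1 hkm
    by_contra hc
    push_neg at hc
    have hkk₀ : k₀ ≤ k := by
      have : (k₀ : ℝ) ≤ k := by nlinarith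
      exact_mod_cast this
    have hlow := (h2 k hkk₀).1
    have : (1 - w) * ((1 + v) * m) ≤ (1 - w) * (k : ℝ) := by nlinarith
    have hgt : m < (1 - w) * ((1 + v) * m) := by rw [hw]; nlinarith
    linarith
  have part3 : (({k : ℕ | 1 ≤ k ∧ partialSum ξ k ω ≤ m} : Set ℕ).encard : ℝ≥0∞)
      < ENNReal.ofReal ((1 + v) * m) := by
    have hsub : {k : ℕ | 1 ≤ k ∧ partialSum ξ k ω ≤ m}
        ⊆ ↑(Finset.Ico 1 ⌈(1 + v) * m⌉₊) := by
      intro k hk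
      simp only [Finset.coe_Ico, Set.mem_Ico]
      exact ⟨hk.1, Nat.lt_ceil.mpr (hA k hk.1 hk.2)⟩
    have hcard := (Set.encard_mono hsub).trans_eq
      (Set.encard_coe_eq_coe_finsetCard (Finset.Ico 1 ⌈(1 + v) * m⌉₊))
    have hceil1 : 1 ≤ ⌈(1 + v) * m⌉₊ := by
      rw [Nat.one_le_ceil_iff]; positivity
    calc (({k : ℕ | 1 ≤ k ∧ partialSum ξ k ω ≤ m} : Set ℕ).encard : ℝ≥0∞)
        ≤ (((Finset.Ico 1 ⌈(1 + v) * m⌉₊).card : ℕ∞) : ℝ≥0∞) :=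
          ENat.toENNReal_le.mpr hcard
      _ = ((⌈(1 + v) * m⌉₊ - 1 : ℕ) : ℝ≥0∞) := by
          rw [ENat.toENNReal_coe, Nat.card_Ico]
      _ < ENNReal.ofReal ((1 + v) * m) := by
          rw [← ENNReal.ofReal_natCast]
          rw [ENNReal.ofReal_lt_ofReal_iff_of_nonneg (Nat.cast_nonneg _)]
          rw [Nat.cast_sub hceil1, Nat.cast_one]
          have := Nat.ceil_lt_add_one (a := (1 + v) * m) (by positivity)
          linarith
  -- Part 2 : lower bound on N(m)
  have part2 : ENNReal.ofReal ((1 - v) * m)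
      < (({k : ℕ | 1 ≤ k ∧ partialSum ξ k ω ≤ m} : Set ℕ).encard : ℝ≥0∞) := by
    set j := ⌊m / (1 + w)⌋₊ with hjdef
    have hjle : (j : ℝ) ≤ m / (1 + w) := Nat.floor_le (by positivity)
    have hjge : m / (1 + w) - 1 < (j : ℝ) := Nat.sub_one_lt_floor _
    have hdivge : m * (1 - w) ≤ m / (1 + w) := by
      rw [le_div_iff₀ h1w]; nlinarith [sq_nonneg w]
    have hjge' : m - w * m - 1 < (j : ℝ) := by nlinarith
    have hk₀j : k₀ ≤ j := by
      have : (k₀ : ℝ) ≤ (j : ℝ) := by nlinarith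
      exact_mod_cast this
    have hsub : ↑(Finset.Icc k₀ j) ⊆ {k : ℕ | 1 ≤ k ∧ partialSum ξ k ω ≤ m} := by
      intro k hk
      simp only [Finset.coe_Icc, Set.mem_Icc] at hk
      refine ⟨le_trans hk₀1 hk.1, ?_⟩
      have hbnd := (h2 k hk.1).2
      have hkj : (k : ℝ) ≤ j := by exact_mod_cast hk.2
      have : (1 + w) * (k : ℝ) ≤ m := by
        calc (1 + w) * (k : ℝ) ≤ (1 + w) * j := by nlinarith
          _ ≤ m := by rw [mul_comm, ← le_div_iff₀ h1w]; exact hjle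
      linarith
    have hcard : ((Finset.Icc k₀ j).card : ℕ∞)
        ≤ ({k : ℕ | 1 ≤ k ∧ partialSum ξ k ω ≤ m} : Set ℕ).encard := by
      rw [← Set.encard_coe_eq_coe_finsetCard]
      exact Set.encard_mono hsub
    have hcardval : ((Finset.Icc k₀ j).card : ℝ) = (j : ℝ) + 1 - (k₀ : ℝ) := by
      rw [Nat.card_Icc, Nat.cast_sub (by omega)]
      push_cast
      ring
    calc ENNReal.ofReal ((1 - v) * m)
        < ENNReal.ofReal (((Finset.Icc k₀ j).card : ℝ)) := by
          rw [ENNReal.ofReal_lt_ofReal_iff_of_nonneg (by nlinarith)]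
          rw [hcardval]
          nlinarith
      _ = (((Finset.Icc k₀ j).card : ℕ∞) : ℝ≥0∞) := by
          rw [ENNReal.ofReal_natCast, ENat.toENNReal_coe]
      _ ≤ _ := ENat.toENNReal_le.mpr hcard
  -- Part 1 : increment bound
  have part1 : (({k : ℕ | 1 ≤ k ∧ m < partialSum ξ k ω ∧
      partialSum ξ k ω ≤ (1 + v) * m} : Set ℕ).encard : ℝ≥0∞)
      < ENNReal.ofReal (2 * v * m) := by
    set a := ⌊m / (1 + w)⌋₊ with hadef
    set b := ⌊(1 + v) * m / (1 - w)⌋₊ with hbdef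
    have hsub : {k : ℕ | 1 ≤ k ∧ m < partialSum ξ k ω ∧ partialSum ξ k ω ≤ (1 + v) * m}
        ⊆ ↑(Finset.Ioc a b) := by
      intro k hk
      obtain ⟨hk1, hkm, hkM⟩ := hk
      have hkk₀ : k₀ ≤ k := by
        by_contra hc
        push_neg at hc
        have hSk : partialSum ξ k ω ≤ partialSum ξ k₀ ω := hmono _ _ hc.le
        have hSk₀ := (h2 k₀ le_rfl).2
        have hup : partialSum ξ k ω < (1 + w) * (w * m + 1) := by nlinarith
        have hlt : (1 + w) * (w * m + 1) ≤ m := by nlinarith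
        linarith
      have hbnd := h2 k hkk₀
      simp only [Finset.coe_Ioc, Set.mem_Ioc]
      constructor
      · have hka : m / (1 + w) < (k : ℝ) := by
          rw [div_lt_iff₀ h1w]; nlinarith [hbnd.2]
        have : (a : ℝ) < k := lt_of_le_of_lt (Nat.floor_le (by positivity)) hka
        exact_mod_cast this
      · apply Nat.le_floor
        rw [le_div_iff₀ h1mw]
        nlinarith [hbnd.1]
    have hcard := (Set.encard_mono hsub).trans_eq
      (Set.encard_coe_eq_coe_finsetCard (Finset.Ioc a b))
    have hcardR : ((Finset.Ioc a b).card : ℝ) < 2 * v * m := by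
      rw [Nat.card_Ioc]
      rcases le_or_gt b a with hba | hab
      · rw [Nat.sub_eq_zero_of_le hba]
        simp only [Nat.cast_zero]
        nlinarith
      · rw [Nat.cast_sub hab.le]
        have hble : (b : ℝ) ≤ (1 + v) * m / (1 - w) := Nat.floor_le (by positivity)
        have h12 : (1:ℝ) ≤ (1 + 2 * w) * (1 - w) := by nlinarith
        have hbub : (1 + v) * m / (1 - w) ≤ (1 + v) * (1 + 2 * w) * m := by
          rw [div_le_iff₀ h1mw]
          nlinarith [mul_nonneg (mul_nonneg (by linarith : (0:ℝ) ≤ 1 + v) hm0.le)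
            (by linarith : (0:ℝ) ≤ (1 + 2 * w) * (1 - w) - 1)]
        have hage : m / (1 + w) - 1 < (a : ℝ) := Nat.sub_one_lt_floor _
        have hdivge : m * (1 - w) ≤ m / (1 + w) := by
          rw [le_div_iff₀ h1w]; nlinarith [sq_nonneg w]
        have hb2 : (b : ℝ) ≤ (1 + v) * (1 + 2 * w) * m := le_trans hble hbub
        have ha2 : m - w * m - 1 < (a : ℝ) := by nlinarith
        have hvw : v * (w * m) ≤ w * m := by nlinarith
        rw [hw] at hb2 ha2 hvw
        nlinarith [hvm]
    calc (({k : ℕ | 1 ≤ k ∧ m < partialSum ξ k ω ∧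
        partialSum ξ k ω ≤ (1 + v) * m} : Set ℕ).encard : ℝ≥0∞)
        ≤ (((Finset.Ioc a b).card : ℕ∞) : ℝ≥0∞) := ENat.toENNReal_le.mpr hcard
      _ = ENNReal.ofReal ((Finset.Ioc a b).card : ℝ) := by
          rw [ENNReal.ofReal_natCast, ENat.toENNReal_coe]
      _ < ENNReal.ofReal (2 * v * m) := by
          rw [ENNReal.ofReal_lt_ofReal_iff_of_nonneg (Nat.cast_nonneg _)]
          exact hcardR
  exact ⟨part1, part2, part3⟩

end PoissonAux

open Real Set

/-- if `(ξ_k)` are i.i.d. mean-one exponentials, `S_k = ξ_1 + … + ξ_k`, and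
`N(t) = #{k ≥ 1 : S_k ≤ t}` is the associated rate-one Poisson process, then for every
`v ∈ (0,1)` there are `c₁, c₂ > 0` such that for every `m₀ ≥ 1`,
`ℙ[∀ m ≥ m₀ :  N((1+v)m) − N(m) < 2vm  and  (1−v)m < N(m) < (1+v)m] ≥ 1 − c₁ e^{−c₂ v m₀}`.
Counts are expressed via `Set.encard` (so `N(b) − N(a) = #{k ≥ 1 : a < S_k ≤ b}`). -/
theorem poisson_process_regularity (v : ℝ) (hv0 : 0 < v) (hv1 : v < 1) :
    ∃ c₁ > (0 : ℝ), ∃ c₂ > (0 : ℝ),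
      ∀ (Ω : Type) (_ : MeasurableSpace Ω) (μ : Measure Ω), IsProbabilityMeasure μ →
        ∀ ξ : ℕ → Ω → ℝ, (∀ k, Measurable (ξ k)) →
          iIndepFun ξ μ →
          (∀ k, ∀ t : ℝ, 0 ≤ t → μ {ω | ξ k ω ≤ t} = ENNReal.ofReal (1 - Real.exp (-t))) →
          ∀ m₀ : ℝ, 1 ≤ m₀ →
            ENNReal.ofReal (1 - c₁ * Real.exp (-c₂ * v * m₀))
              ≤ μ {ω | ∀ m : ℝ, m₀ ≤ m →
                  (({k : ℕ | 1 ≤ k ∧ m < partialSum ξ k ω ∧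
                      partialSum ξ k ω ≤ (1 + v) * m} : Set ℕ).encard : ℝ≥0∞)
                    < ENNReal.ofReal (2 * v * m) ∧
                  ENNReal.ofReal ((1 - v) * m)
                    < (({k : ℕ | 1 ≤ k ∧ partialSum ξ k ω ≤ m} : Set ℕ).encard : ℝ≥0∞) ∧
                  (({k : ℕ | 1 ≤ k ∧ partialSum ξ k ω ≤ m} : Set ℕ).encard : ℝ≥0∞)
                    < ENNReal.ofReal ((1 + v) * m)} := by
  set w : ℝ := v / 16 with hw
  have hw0 : 0 < w := by rw [hw]; positivity
  have hw1 : w < 1 := by rw [hw]; linarith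
  set ρ : ℝ := min (w - Real.log (1 + w)) (Real.log (1 + w) - w + w ^ 2) with hρ
  have hρ0 : 0 < ρ := lt_min (rate1_pos hw0) (rate2_pos hw0)
  have hq1 : rexp (-ρ) < 1 := by
    rw [Real.exp_lt_one_iff]; linarith
  set C₀ : ℝ := 2 * (1 - rexp (-ρ))⁻¹ with hC₀
  have hC₀0 : 0 < C₀ := by
    rw [hC₀]
    exact _root_.mul_pos two_pos (inv_pos.mpr (by linarith))
  refine ⟨C₀ + rexp (ρ / 4), by positivity, ρ / 16, by positivity, ?_⟩
  intro Ω mΩ μ hprob ξ hmeas hind hcdf m₀ hm₀1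
  haveI := hprob
  by_cases hsmall : m₀ < 4 / v
  · have hvm₀ : v * m₀ < 4 := by
      rw [lt_div_iff₀ hv0] at hsmall; linarith
    have hexp : 1 ≤ rexp (ρ / 4) * rexp (-(ρ / 16) * v * m₀) := by
      rw [← Real.exp_add, Real.one_le_exp_iff]
      nlinarith [mul_nonneg hρ0.le (by linarith : (0:ℝ) ≤ 4 - v * m₀)]
    have hle : 1 - (C₀ + rexp (ρ / 4)) * rexp (-(ρ / 16) * v * m₀) ≤ 0 := by
      have hx : 0 < rexp (-(ρ / 16) * v * m₀) := exp_pos _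
      nlinarith [_root_.mul_pos hC₀0 hx]
    rw [ENNReal.ofReal_eq_zero.mpr hle]
    exact zero_le
  · push_neg at hsmall
    set k₀ : ℕ := ⌈v * m₀ / 16⌉₊ with hk₀def
    have hk₀l : v * m₀ / 16 ≤ (k₀ : ℝ) := Nat.le_ceil _
    have hk₀u : (k₀ : ℝ) ≤ v * m₀ / 16 + 1 := (Nat.ceil_lt_add_one (by positivity)).le
    have hSmeas : ∀ n, Measurable (partialSum ξ n) := by
      intro n
      unfold partialSum
      exact Finset.measurable_sum _ (fun i _ => hmeas i)
    set Bad0 : Set Ω := ⋃ i : ℕ, {ω | ξ i ω < 0} with hBad0def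
    set Bad1 : Set Ω := ⋃ j : ℕ, ({ω | partialSum ξ (k₀ + j) ω ≤ (1 - w) * ((k₀ + j : ℕ) : ℝ)}
        ∪ {ω | (1 + w) * ((k₀ + j : ℕ) : ℝ) ≤ partialSum ξ (k₀ + j) ω}) with hBad1def
    have hBadmeas : MeasurableSet (Bad0 ∪ Bad1) := by
      apply MeasurableSet.union
      · exact MeasurableSet.iUnion (fun i => measurableSet_lt (hmeas i) measurable_const)
      · refine MeasurableSet.iUnion (fun j => MeasurableSet.union ?_ ?_)
        · exact measurableSet_le (hSmeas _) measurable_const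
        · exact measurableSet_le measurable_const (hSmeas _)
    have hB0 : μ Bad0 = 0 := by
      refine measure_iUnion_null (fun i => measure_mono_null
        (fun ω h => show ξ i ω ≤ 0 from le_of_lt h) ?_)
      exact (show μ {ω | ξ i ω ≤ 0} = 0 by simpa using hcdf i 0 le_rfl)
    have hB1 : μ Bad1 ≤ ENNReal.ofReal (C₀ * rexp (-ρ * k₀)) :=
      bad_bound hmeas hind hcdf hw0 hw1 hρ k₀
    have hBad : μ (Bad0 ∪ Bad1) ≤ ENNReal.ofReal (C₀ * rexp (-ρ * k₀)) := by
      refine le_trans (measure_union_le _ _) ?_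
      rw [hB0, zero_add]
      exact hB1
    have hchain : C₀ * rexp (-ρ * k₀)
        ≤ (C₀ + rexp (ρ / 4)) * rexp (-(ρ / 16) * v * m₀) := by
      have he : rexp (-ρ * k₀) ≤ rexp (-(ρ / 16) * v * m₀) := by
        apply Real.exp_le_exp.mpr
        nlinarith
      calc C₀ * rexp (-ρ * k₀) ≤ C₀ * rexp (-(ρ / 16) * v * m₀) := by
            exact mul_le_mul_of_nonneg_left he hC₀0.le
        _ ≤ (C₀ + rexp (ρ / 4)) * rexp (-(ρ / 16) * v * m₀) := by
            apply mul_le_mul_of_nonneg_right _ (exp_pos _).le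
            linarith [Real.exp_pos (ρ / 4)]
    have hsub : (Bad0 ∪ Bad1)ᶜ ⊆ {ω | ∀ m : ℝ, m₀ ≤ m →
        (({k : ℕ | 1 ≤ k ∧ m < partialSum ξ k ω ∧
            partialSum ξ k ω ≤ (1 + v) * m} : Set ℕ).encard : ℝ≥0∞)
          < ENNReal.ofReal (2 * v * m) ∧
        ENNReal.ofReal ((1 - v) * m)
          < (({k : ℕ | 1 ≤ k ∧ partialSum ξ k ω ≤ m} : Set ℕ).encard : ℝ≥0∞) ∧
        (({k : ℕ | 1 ≤ k ∧ partialSum ξ k ω ≤ m} : Set ℕ).encard : ℝ≥0∞)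
          < ENNReal.ofReal ((1 + v) * m)} := by
      intro ω hω
      rw [Set.mem_compl_iff, Set.mem_union, not_or, hBad0def, hBad1def] at hω
      obtain ⟨hω0, hω1⟩ := hω
      simp only [Set.mem_iUnion, not_exists, Set.mem_setOf_eq] at hω0
      have h1 : ∀ i, 0 ≤ ξ i ω := fun i => not_lt.mp (hω0 i)
      have h2 : ∀ k : ℕ, k₀ ≤ k →
          (1 - w) * k < partialSum ξ k ω ∧ partialSum ξ k ω < (1 + w) * k := by
        intro k hk
        obtain ⟨j, rfl⟩ : ∃ j, k = k₀ + j := ⟨k - k₀, by omega⟩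
        have hj : ω ∉ ({ω | partialSum ξ (k₀ + j) ω ≤ (1 - w) * ((k₀ + j : ℕ) : ℝ)}
            ∪ {ω | (1 + w) * ((k₀ + j : ℕ) : ℝ) ≤ partialSum ξ (k₀ + j) ω}) := by
          intro hc
          exact hω1 (Set.mem_iUnion.mpr ⟨j, hc⟩)
        rw [Set.mem_union, not_or] at hj
        obtain ⟨hj1, hj2⟩ := hj
        simp only [Set.mem_setOf_eq, not_le] at hj1 hj2
        exact ⟨hj1, hj2⟩
      intro m hmm
      exact deterministic hv0 hv1 hw hsmall hmm hk₀l hk₀u ω h1 h2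
    calc ENNReal.ofReal (1 - (C₀ + rexp (ρ / 4)) * rexp (-(ρ / 16) * v * m₀))
        = 1 - ENNReal.ofReal ((C₀ + rexp (ρ / 4)) * rexp (-(ρ / 16) * v * m₀)) := by
          rw [← ENNReal.ofReal_one, ← ENNReal.ofReal_sub _ (by positivity)]
      _ ≤ 1 - μ (Bad0 ∪ Bad1) :=
          tsub_le_tsub_left (hBad.trans (ENNReal.ofReal_le_ofReal hchain)) 1
      _ = μ (Bad0 ∪ Bad1)ᶜ := (prob_compl_eq_one_sub hBadmeas).symm
      _ ≤ _ := measure_mono hsub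

end
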